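/- Let G be a connected graph with n ≥ 2 vertices and m edges. For any two distinct new vertices i, j ∈ V′, the resistance distance in the triangulation and that in the subdivision are related by Ω^T_{ij} = (1/3)·Ω^S_{ij} + 2/3. -/

import Mathlib

open BigOperators Matrix

namespace KirchhoffPaper

/-- `B` is a Moore–Penrose (pseudo)inverse of `A`. -/
def IsMoorePenrose {n : Type*} [Fintype n] [DecidableEq n] (A B : Matrix n n ℝ) : Prop :=
  A * B * A = A ∧ B * A * B = B ∧ (A * B)ᵀ = A * B ∧ (B * A)ᵀ = B * A

variable {V : Type*}

/-- The resistance distance between `i` and `j` in `G`: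
`Ω_{ij} = L⁺_{ii} + L⁺_{jj} - 2 L⁺_{ij}` with `L⁺` the Moore–Penrose inverse of the Laplacian. -/
noncomputable def resistanceDistance [Fintype V] [DecidableEq V]
    (G : SimpleGraph V) [DecidableRel G.Adj] (i j : V) : ℝ :=
  letI := Classical.propDecidable
  if h : ∃ B, IsMoorePenrose (G.lapMatrix ℝ) B then
    h.choose i i + h.choose j j - 2 * h.choose i j
  else 0

/-- Kirchhoff index `R(G) = Σ_{{i,j}⊆V} Ω_{ij}` (as half the sum over ordered pairs;
note `Ω_{ii} = 0`). -/
noncomputable def kirchhoffIndex [Fintype V] [DecidableEq V]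
    (G : SimpleGraph V) [DecidableRel G.Adj] : ℝ :=
  (1 / 2) * ∑ i, ∑ j, resistanceDistance G i j

/-- Additive degree-Kirchhoff index `R⁺(G) = Σ_{{i,j}⊆V} (d_i + d_j) Ω_{ij}`. -/
noncomputable def addDegKirchhoffIndex [Fintype V] [DecidableEq V]
    (G : SimpleGraph V) [DecidableRel G.Adj] : ℝ :=
  (1 / 2) * ∑ i, ∑ j, ((G.degree i : ℝ) + (G.degree j : ℝ)) * resistanceDistance G i j

/-- Multiplicative degree-Kirchhoff index `R*(G) = Σ_{{i,j}⊆V} d_i d_j Ω_{ij}`. -/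
noncomputable def mulDegKirchhoffIndex [Fintype V] [DecidableEq V]
    (G : SimpleGraph V) [DecidableRel G.Adj] : ℝ :=
  (1 / 2) * ∑ i, ∑ j, ((G.degree i : ℝ) * (G.degree j : ℝ)) * resistanceDistance G i j

/-- The subdivision `S(G)`: each edge of `G` is replaced by a path of length two through a
new vertex (one new vertex per edge of `G`). -/
def subdivision [DecidableEq V] (G : SimpleGraph V) : SimpleGraph (V ⊕ G.edgeSet) where
  Adj x y :=
    match x, y with
    | Sum.inl u, Sum.inr e => u ∈ (e : Sym2 V)
    | Sum.inr e, Sum.inl u => u ∈ (e : Sym2 V)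
    | _, _ => False
  symm := by constructor; rintro (u | e) (v | f) h <;> exact h
  loopless := by constructor; rintro (u | e) h <;> exact h

/-- The triangulation `T(G)`: each edge `uv` of `G` is turned into a triangle `uwv`
with `w` a new vertex associated with `uv`. -/
def triangulation [DecidableEq V] (G : SimpleGraph V) : SimpleGraph (V ⊕ G.edgeSet) where
  Adj x y :=
    match x, y with
    | Sum.inl u, Sum.inl v => G.Adj u v
    | Sum.inl u, Sum.inr e => u ∈ (e : Sym2 V)
    | Sum.inr e, Sum.inl u => u ∈ (e : Sym2 V)
    | _, _ => False
  symm := by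
    constructor
    rintro (u | e) (v | f) h
    · exact G.adj_symm h
    · exact h
    · exact h
    · exact h
  loopless := by
    constructor
    rintro (u | e) h
    · exact G.loopless.irrefl u h
    · exact h

instance [Fintype V] [DecidableEq V] (G : SimpleGraph V) [DecidableRel G.Adj] :
    DecidableRel (subdivision G).Adj := fun x y =>
  match x, y with
  | Sum.inl _, Sum.inl _ => inferInstanceAs (Decidable False)
  | Sum.inl u, Sum.inr e => inferInstanceAs (Decidable (u ∈ (e : Sym2 V)))
  | Sum.inr e, Sum.inl u => inferInstanceAs (Decidable (u ∈ (e : Sym2 V)))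
  | Sum.inr _, Sum.inr _ => inferInstanceAs (Decidable False)

instance [Fintype V] [DecidableEq V] (G : SimpleGraph V) [DecidableRel G.Adj] :
    DecidableRel (triangulation G).Adj := fun x y =>
  match x, y with
  | Sum.inl u, Sum.inl v => inferInstanceAs (Decidable (G.Adj u v))
  | Sum.inl u, Sum.inr e => inferInstanceAs (Decidable (u ∈ (e : Sym2 V)))
  | Sum.inr e, Sum.inl u => inferInstanceAs (Decidable (u ∈ (e : Sym2 V)))
  | Sum.inr _, Sum.inr _ => inferInstanceAs (Decidable False)

/-- A bundled finite simple graph (with decidable adjacency), used for iterating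
the subdivision and triangulation constructions. -/
structure FGraph where
  V : Type*
  [fV : Fintype V]
  [dV : DecidableEq V]
  G : SimpleGraph V
  [dG : DecidableRel G.Adj]

attribute [instance] FGraph.fV FGraph.dV FGraph.dG

/-- Subdivision, as an operation on bundled graphs. -/
def FGraph.subdiv (H : FGraph) : FGraph := { V := H.V ⊕ H.G.edgeSet, G := subdivision H.G }

/-- Triangulation, as an operation on bundled graphs. -/
def FGraph.triang (H : FGraph) : FGraph := { V := H.V ⊕ H.G.edgeSet, G := triangulation H.G }

/-- Kirchhoff index of a bundled graph. -/
noncomputable def FGraph.R (H : FGraph) : ℝ := kirchhoffIndex H.G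

/-- Additive degree-Kirchhoff index of a bundled graph. -/
noncomputable def FGraph.Rplus (H : FGraph) : ℝ := addDegKirchhoffIndex H.G

/-- Multiplicative degree-Kirchhoff index of a bundled graph. -/
noncomputable def FGraph.Rstar (H : FGraph) : ℝ := mulDegKirchhoffIndex H.G


/-! ### Auxiliary material for the proof of `statement_14` -/

section Aux

open Matrix

/-- The all-ones matrix. -/
def Km (α β : Type*) : Matrix α β ℝ := Matrix.of fun _ _ => 1

@[simp] lemma Km_apply {α β : Type*} (i : α) (j : β) : Km α β i j = 1 := rfl

lemma Km_transpose (α β : Type*) : (Km α β)ᵀ = Km β α := rfl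

lemma Km_mul_Km {α β γ : Type*} [Fintype β] :
    Km α β * Km β γ = (Fintype.card β : ℝ) • Km α γ := by
  ext i j; simp [Matrix.mul_apply, Km, Finset.card_univ]

lemma Km_sum_blocks {α β : Type*} :
    Km (α ⊕ β) (α ⊕ β) = Matrix.fromBlocks (Km α α) (Km α β) (Km β α) (Km β β) := by
  ext x y; rcases x with a | b <;> rcases y with a' | b' <;> rfl

variable {W : Type*} [Fintype W] [DecidableEq W]

lemma mp_unique {A B₁ B₂ : Matrix W W ℝ} (h₁ : IsMoorePenrose A B₁)
    (h₂ : IsMoorePenrose A B₂) : B₁ = B₂ := by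
  obtain ⟨a1, b1, c1, d1⟩ := h₁
  obtain ⟨a2, b2, c2, d2⟩ := h₂
  have hAB : A * B₁ = A * B₂ := by
    calc A * B₁ = (A * B₁)ᵀ := c1.symm
    _ = ((A * B₂ * A) * B₁)ᵀ := by rw [a2]
    _ = ((A * B₂) * (A * B₁))ᵀ := by simp only [Matrix.mul_assoc]
    _ = (A * B₁)ᵀ * (A * B₂)ᵀ := by rw [Matrix.transpose_mul]
    _ = (A * B₁) * (A * B₂) := by rw [c1, c2]
    _ = (A * B₁ * A) * B₂ := by simp only [Matrix.mul_assoc]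
    _ = A * B₂ := by rw [a1]
  have hBA : B₁ * A = B₂ * A := by
    calc B₁ * A = (B₁ * A)ᵀ := d1.symm
    _ = (B₁ * (A * B₂ * A))ᵀ := by rw [a2]
    _ = ((B₁ * A) * (B₂ * A))ᵀ := by simp only [Matrix.mul_assoc]
    _ = (B₂ * A)ᵀ * (B₁ * A)ᵀ := by rw [Matrix.transpose_mul]
    _ = (B₂ * A) * (B₁ * A) := by rw [d1, d2]
    _ = B₂ * (A * B₁ * A) := by simp only [Matrix.mul_assoc]
    _ = B₂ * A := by rw [a1]
  calc B₁ = B₁ * A * B₁ := b1.symm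
  _ = B₁ * (A * B₂) := by rw [Matrix.mul_assoc, hAB]
  _ = (B₂ * A) * B₂ := by rw [← Matrix.mul_assoc, hBA]
  _ = B₂ := b2

lemma mp_of {M C Z : Matrix W W ℝ} (hM : Mᵀ = M) (hC : Cᵀ = C) (hZ : Zᵀ = Z)
    (hMZ : M * Z = 0) (hCZ : C * Z = 0) (hMC : M * C = 1 - Z) : IsMoorePenrose M C := by
  have hCM : C * M = 1 - Z := by
    have := congrArg Matrix.transpose hMC
    rw [Matrix.transpose_mul, hM, hC, Matrix.transpose_sub, Matrix.transpose_one, hZ] at this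
    exact this
  have hZM : Z * M = 0 := by
    have := congrArg Matrix.transpose hMZ
    rwa [Matrix.transpose_mul, hM, hZ, Matrix.transpose_zero] at this
  have hZC : Z * C = 0 := by
    have := congrArg Matrix.transpose hCZ
    rwa [Matrix.transpose_mul, hC, hZ, Matrix.transpose_zero] at this
  refine ⟨?_, ?_, ?_, ?_⟩
  · rw [hMC, Matrix.sub_mul, Matrix.one_mul, hZM, sub_zero]
  · rw [Matrix.mul_assoc, hMC, Matrix.mul_sub, Matrix.mul_one, hCZ, sub_zero]
  · rw [hMC, Matrix.transpose_sub, Matrix.transpose_one, hZ]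
  · rw [hCM, Matrix.transpose_sub, Matrix.transpose_one, hZ]

lemma resistance_eq (H : SimpleGraph W) [DecidableRel H.Adj] {X : Matrix W W ℝ}
    (hX : IsMoorePenrose (H.lapMatrix ℝ) X) (i j : W) :
    resistanceDistance H i j = X i i + X j j - 2 * X i j := by
  have hex : ∃ B, IsMoorePenrose (H.lapMatrix ℝ) B := ⟨X, hX⟩
  rw [resistanceDistance]
  have e1 : (fun a b : W => Classical.propDecidable (a = b))
      = (inferInstance : DecidableEq W) := by
    funext a b; exact Subsingleton.elim _ _
  have e2 : (fun a b : W => Classical.propDecidable (H.Adj a b))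
      = (inferInstance : DecidableRel H.Adj) := by
    funext a b; exact Subsingleton.elim _ _
  rw [e1, e2, dif_pos hex, mp_unique hex.choose_spec hX]

lemma sc_aux1 (x y : ℝ) (h : x + y ≠ 0) :
    (-(2 * x + y) / (3 * (x + y) ^ 2) + 2 * (x + y)⁻¹ / 3) * x
      + (-(2 * x + y) / (3 * (x + y) ^ 2) + (x + y)⁻¹ / 3) * y = 0 := by
  field_simp
  ring

lemma sc_aux2 (x y : ℝ) (h : x + y ≠ 0) :
    (-(2 * x + y) / (3 * (x + y) ^ 2) + (x + y)⁻¹ / 3) * x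
      + (-(2 * x + y) / (3 * (x + y) ^ 2)) * y = -3⁻¹ := by
  field_simp
  ring

lemma lap_mul_Km {γ : Type*} (H : SimpleGraph W) [DecidableRel H.Adj] :
    H.lapMatrix ℝ * Km W γ = 0 := by
  ext i j
  have := congrFun (H.lapMatrix_mulVec_const_eq_zero (R := ℝ)) i
  simp only [Matrix.mulVec, dotProduct, Pi.zero_apply] at this
  simpa [Matrix.mul_apply, Km] using this

lemma exists_good_pinv (H : SimpleGraph W) [DecidableRel H.Adj] (hconn : H.Connected) :
    ∃ X : Matrix W W ℝ, IsMoorePenrose (H.lapMatrix ℝ) X ∧ Xᵀ = X ∧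
      X * Km W W = 0 ∧
      H.lapMatrix ℝ * X = 1 - ((Fintype.card W : ℝ))⁻¹ • Km W W := by
  haveI : Nonempty W := hconn.nonempty
  set L := H.lapMatrix ℝ with hLdef
  have hcard : (0:ℝ) < (Fintype.card W : ℝ) := by positivity
  set c : ℝ := ((Fintype.card W : ℝ))⁻¹ with hc
  have hcne : (Fintype.card W : ℝ) ≠ 0 := ne_of_gt hcard
  set M : Matrix W W ℝ := L + c • Km W W with hM
  have hLsym : Lᵀ = L := (H.isSymm_lapMatrix (R := ℝ)).eq
  have hMsym : Mᵀ = M := by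
    rw [hM, Matrix.transpose_add, hLsym, Matrix.transpose_smul, Km_transpose]
  have hinj : Function.Injective M.mulVec := by
    have hker : ∀ x : W → ℝ, M.mulVec x = 0 → x = 0 := by
      intro x hx
      have hquad : x ⬝ᵥ M.mulVec x = 0 := by rw [hx]; simp
      have hsplit : x ⬝ᵥ M.mulVec x = x ⬝ᵥ L.mulVec x + c * (∑ i, x i) ^ 2 := by
        rw [hM, Matrix.add_mulVec, dotProduct_add, Matrix.smul_mulVec, dotProduct_smul]
        congr 1
        have : (Km W W).mulVec x = fun _ => ∑ i, x i := by
          ext i; simp [Matrix.mulVec, dotProduct, Km]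
        rw [this]
        simp only [dotProduct, Pi.smul_apply, smul_eq_mul]
        rw [← Finset.sum_mul]
        ring
      have h1 : 0 ≤ x ⬝ᵥ L.mulVec x := by
        have := (H.posSemidef_lapMatrix (R := ℝ)).dotProduct_mulVec_nonneg x
        simpa using this
      have h2 : 0 ≤ c * (∑ i, x i) ^ 2 := by positivity
      have hL0 : x ⬝ᵥ L.mulVec x = 0 := by nlinarith [hsplit, hquad]
      have hsum0 : (∑ i, x i) = 0 := by
        have : c * (∑ i, x i) ^ 2 = 0 := by nlinarith [hsplit, hquad]
        rcases mul_eq_zero.mp this with h | h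
        · exact absurd h (by positivity)
        · exact pow_eq_zero_iff (by norm_num) |>.mp h
      have hconst : ∀ i j : W, x i = x j := by
        intro i j
        have hform : Matrix.toLinearMap₂' ℝ (H.lapMatrix ℝ) x x = 0 := by
          rw [Matrix.toLinearMap₂'_apply']; exact hL0
        exact (H.lapMatrix_toLinearMap₂'_apply'_eq_zero_iff_forall_reachable x).mp hform i j
          (hconn.preconnected i j)
      ext i
      have : (∑ j, x j) = (Fintype.card W : ℝ) * x i := by
        rw [Finset.sum_congr rfl (fun j _ => hconst j i)]
        simp [Finset.card_univ, mul_comm]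
      rw [this] at hsum0
      simpa [hcne] using mul_eq_zero.mp hsum0
    intro x y hxy
    have : M.mulVec (x - y) = 0 := by rw [Matrix.mulVec_sub, hxy, sub_self]
    exact sub_eq_zero.mp (hker _ this)
  have hunit : IsUnit M := Matrix.mulVec_injective_iff_isUnit.mp hinj
  have hdet : IsUnit M.det := (Matrix.isUnit_iff_isUnit_det M).mp hunit
  have hMK : M * Km W W = Km W W := by
    rw [hM, Matrix.add_mul, lap_mul_Km, Matrix.smul_mul, Km_mul_Km, smul_smul,
      inv_mul_cancel₀ hcne, one_smul, zero_add]
  have hMinvK : M⁻¹ * Km W W = Km W W := by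
    calc M⁻¹ * Km W W = M⁻¹ * (M * Km W W) := by rw [hMK]
    _ = (M⁻¹ * M) * Km W W := by rw [Matrix.mul_assoc]
    _ = Km W W := by rw [Matrix.nonsing_inv_mul M hdet, Matrix.one_mul]
  have hMinvsym : (M⁻¹)ᵀ = M⁻¹ := by rw [Matrix.transpose_nonsing_inv, hMsym]
  have hKMinv : Km W W * M⁻¹ = Km W W := by
    have := congrArg Matrix.transpose hMinvK
    rwa [Matrix.transpose_mul, Km_transpose, hMinvsym] at this
  set X : Matrix W W ℝ := M⁻¹ - c • Km W W with hX
  have hXsym : Xᵀ = X := by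
    rw [hX, Matrix.transpose_sub, hMinvsym, Matrix.transpose_smul, Km_transpose]
  have hXK : X * Km W W = 0 := by
    rw [hX, Matrix.sub_mul, hMinvK, Matrix.smul_mul, Km_mul_Km, smul_smul,
      inv_mul_cancel₀ hcne, one_smul, sub_self]
  have hLK : L * Km W W = 0 := lap_mul_Km H
  have hLX : L * X = 1 - c • Km W W := by
    have hLM : L = M - c • Km W W := by rw [hM, add_sub_cancel_right]
    rw [hX, Matrix.mul_sub, Matrix.mul_smul, hLK, smul_zero, sub_zero, hLM,
      Matrix.sub_mul, Matrix.mul_nonsing_inv M hdet, Matrix.smul_mul, hKMinv]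
  refine ⟨X, ?_, hXsym, hXK, hLX⟩
  exact mp_of hLsym hXsym (by rw [Matrix.transpose_smul, Km_transpose])
    (by rw [Matrix.mul_smul, hLK, smul_zero])
    (by rw [Matrix.mul_smul, hXK, smul_zero]) hLX

end Aux

section GraphAux

open Matrix

set_option linter.unusedSectionVars false

variable [Fintype V] [DecidableEq V] (G : SimpleGraph V) [DecidableRel G.Adj]

@[simp] lemma sub_adj_ll (u v : V) : (subdivision G).Adj (Sum.inl u) (Sum.inl v) ↔ False := Iff.rfl
@[simp] lemma sub_adj_lr (u : V) (e : G.edgeSet) :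
    (subdivision G).Adj (Sum.inl u) (Sum.inr e) ↔ u ∈ (e : Sym2 V) := Iff.rfl
@[simp] lemma sub_adj_rl (e : G.edgeSet) (u : V) :
    (subdivision G).Adj (Sum.inr e) (Sum.inl u) ↔ u ∈ (e : Sym2 V) := Iff.rfl
@[simp] lemma sub_adj_rr (e f : G.edgeSet) :
    (subdivision G).Adj (Sum.inr e) (Sum.inr f) ↔ False := Iff.rfl
@[simp] lemma tri_adj_ll (u v : V) :
    (triangulation G).Adj (Sum.inl u) (Sum.inl v) ↔ G.Adj u v := Iff.rfl
@[simp] lemma tri_adj_lr (u : V) (e : G.edgeSet) :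
    (triangulation G).Adj (Sum.inl u) (Sum.inr e) ↔ u ∈ (e : Sym2 V) := Iff.rfl
@[simp] lemma tri_adj_rl (e : G.edgeSet) (u : V) :
    (triangulation G).Adj (Sum.inr e) (Sum.inl u) ↔ u ∈ (e : Sym2 V) := Iff.rfl
@[simp] lemma tri_adj_rr (e f : G.edgeSet) :
    (triangulation G).Adj (Sum.inr e) (Sum.inr f) ↔ False := Iff.rfl

lemma sum_edgeSet' (f : Sym2 V → ℝ) : ∑ e : G.edgeSet, f e = ∑ e ∈ G.edgeFinset, f e :=
  (Finset.sum_subtype G.edgeFinset (fun e => SimpleGraph.mem_edgeFinset) f).symm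

lemma inc_sum_col (u : V) :
    ∑ e : G.edgeSet, (if u ∈ (e : Sym2 V) then (1:ℝ) else 0) = G.degree u := by
  rw [sum_edgeSet' G (fun e => if u ∈ e then (1:ℝ) else 0), Finset.sum_boole,
    ← SimpleGraph.incidenceFinset_eq_filter, SimpleGraph.card_incidenceFinset_eq_degree]

lemma inc_sum_row (e : G.edgeSet) :
    ∑ u : V, (if u ∈ (e : Sym2 V) then (1:ℝ) else 0) = 2 := by
  obtain ⟨e, he⟩ := e
  induction e with
  | _ a b =>
    have hab : a ≠ b := G.ne_of_adj (G.mem_edgeSet.mp he)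
    rw [Finset.sum_boole]
    have : Finset.univ.filter (fun u => u ∈ s(a, b)) = {a, b} := by
      ext u; simp [Sym2.mem_iff]
    rw [this, Finset.card_pair hab]
    norm_num

lemma inc_sum_two {u v : V} (huv : u ≠ v) :
    ∑ e : G.edgeSet, (if u ∈ (e : Sym2 V) then (1:ℝ) else 0) *
      (if v ∈ (e : Sym2 V) then (1:ℝ) else 0) = if G.Adj u v then 1 else 0 := by
  have key : ∀ e : G.edgeSet, (if u ∈ (e : Sym2 V) then (1:ℝ) else 0) *
      (if v ∈ (e : Sym2 V) then (1:ℝ) else 0)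
      = if u ∈ (e : Sym2 V) ∧ v ∈ (e : Sym2 V) then (1:ℝ) else 0 := by
    intro e; by_cases h1 : u ∈ (e : Sym2 V) <;> by_cases h2 : v ∈ (e : Sym2 V) <;>
      simp [h1, h2]
  rw [Finset.sum_congr rfl (fun e _ => key e),
    sum_edgeSet' G (fun e => if u ∈ e ∧ v ∈ e then (1:ℝ) else 0), Finset.sum_boole]
  have : G.edgeFinset.filter (fun e => u ∈ e ∧ v ∈ e)
      = if G.Adj u v then {s(u, v)} else ∅ := by
    ext e
    simp only [Finset.mem_filter, SimpleGraph.mem_edgeFinset, SimpleGraph.mem_edgeSet]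
    rw [Sym2.mem_and_mem_iff huv]
    by_cases h : G.Adj u v
    · simp only [h, if_true, Finset.mem_singleton]
      constructor
      · rintro ⟨_, h2⟩; exact h2
      · rintro rfl; exact ⟨h, rfl⟩
    · simp only [h, if_false, Finset.notMem_empty, iff_false]
      rintro ⟨h1, rfl⟩
      exact h (G.mem_edgeSet.mp h1)
  rw [this]
  by_cases h : G.Adj u v <;> simp [h]

/-- the real degree (diagonal) matrix of `G` -/
noncomputable def Dm : Matrix V V ℝ := Matrix.diagonal (fun u => (G.degree u : ℝ))

/-- the real (unoriented) incidence matrix of `G` -/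
def Bm : Matrix V G.edgeSet ℝ :=
  Matrix.of fun u e => if u ∈ (e : Sym2 V) then (1:ℝ) else 0

lemma deg_sub_inl (u : V) :
    (((subdivision G).degree (Sum.inl u) : ℝ)) = (G.degree u : ℝ) := by
  rw [SimpleGraph.degree_eq_sum_if_adj, Fintype.sum_sum_type]
  simp only [sub_adj_ll, sub_adj_lr, if_false]
  rw [inc_sum_col]
  simp

lemma deg_sub_inr (e : G.edgeSet) :
    (((subdivision G).degree (Sum.inr e) : ℝ)) = 2 := by
  rw [SimpleGraph.degree_eq_sum_if_adj, Fintype.sum_sum_type]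
  simp only [sub_adj_rl, sub_adj_rr, if_false]
  rw [inc_sum_row]
  simp

lemma deg_tri_inl (u : V) :
    (((triangulation G).degree (Sum.inl u) : ℝ))
      = ((subdivision G).degree (Sum.inl u) : ℝ) + (G.degree u : ℝ) := by
  rw [SimpleGraph.degree_eq_sum_if_adj, Fintype.sum_sum_type, deg_sub_inl]
  simp only [tri_adj_ll, tri_adj_lr]
  rw [inc_sum_col, ← SimpleGraph.degree_eq_sum_if_adj]

lemma deg_tri_inr (e : G.edgeSet) :
    (((triangulation G).degree (Sum.inr e) : ℝ)) = 2 := by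
  rw [SimpleGraph.degree_eq_sum_if_adj, Fintype.sum_sum_type]
  simp only [tri_adj_rl, tri_adj_rr, if_false]
  rw [inc_sum_row]
  simp

lemma lap_sub_blocks :
    (subdivision G).lapMatrix ℝ
      = Matrix.fromBlocks (Dm G) (-(Bm G)) (-(Bm G)ᵀ) ((2:ℝ) • 1) := by
  ext x y
  rcases x with u | e <;> rcases y with v | f
  · by_cases huv : u = v
    · subst huv
      simp [SimpleGraph.lapMatrix, SimpleGraph.degMatrix, Dm, Matrix.diagonal_apply_eq,
        deg_sub_inl]
    · simp [SimpleGraph.lapMatrix, SimpleGraph.degMatrix, Dm,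
        Matrix.diagonal_apply_ne, huv, Sum.inl.injEq]
  · simp [SimpleGraph.lapMatrix, SimpleGraph.degMatrix, Bm]
  · simp [SimpleGraph.lapMatrix, SimpleGraph.degMatrix, Bm]
  · by_cases hef : e = f
    · subst hef
      simp [SimpleGraph.lapMatrix, SimpleGraph.degMatrix, Matrix.diagonal_apply_eq,
        deg_sub_inr, Matrix.one_apply]
    · simp [SimpleGraph.lapMatrix, SimpleGraph.degMatrix,
        Matrix.diagonal_apply_ne, hef, Sum.inr.injEq, Matrix.one_apply]

lemma lap_tri_blocks :
    (triangulation G).lapMatrix ℝ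
      = (subdivision G).lapMatrix ℝ + Matrix.fromBlocks (G.lapMatrix ℝ) 0 0 0 := by
  ext x y
  rcases x with u | e <;> rcases y with v | f
  · by_cases huv : u = v
    · subst huv
      simp only [SimpleGraph.lapMatrix, SimpleGraph.degMatrix, Matrix.sub_apply,
        Matrix.add_apply, Matrix.fromBlocks_apply₁₁, Matrix.diagonal_apply_eq,
        SimpleGraph.adjMatrix_apply, tri_adj_ll, sub_adj_ll, if_false]
      rw [deg_tri_inl]
      simp [G.irrefl]
    · simp [SimpleGraph.lapMatrix, SimpleGraph.degMatrix,
        Matrix.diagonal_apply_ne, huv, Sum.inl.injEq]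
  · simp [SimpleGraph.lapMatrix, SimpleGraph.degMatrix]
  · simp [SimpleGraph.lapMatrix, SimpleGraph.degMatrix]
  · by_cases hef : e = f
    · subst hef
      simp only [SimpleGraph.lapMatrix, SimpleGraph.degMatrix, Matrix.sub_apply,
        Matrix.add_apply, Matrix.fromBlocks_apply₂₂, Matrix.diagonal_apply_eq,
        SimpleGraph.adjMatrix_apply, tri_adj_rr, sub_adj_rr, if_false]
      rw [deg_tri_inr, deg_sub_inr]
      simp
    · simp [SimpleGraph.lapMatrix, SimpleGraph.degMatrix,
        Matrix.diagonal_apply_ne, hef, Sum.inr.injEq]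

lemma BBT : Bm G * (Bm G)ᵀ = Dm G + G.adjMatrix ℝ := by
  ext u v
  by_cases huv : u = v
  · subst huv
    have hl : (Bm G * (Bm G)ᵀ) u u = (G.degree u : ℝ) := by
      rw [Matrix.mul_apply, ← inc_sum_col G u]
      refine Finset.sum_congr rfl (fun e _ => ?_)
      by_cases h : u ∈ (e : Sym2 V) <;> simp [Bm, h]
    rw [hl]
    simp [Dm, SimpleGraph.adjMatrix_apply, G.irrefl]
  · simp only [Matrix.mul_apply, Matrix.transpose_apply, Bm, Matrix.of_apply,
      Matrix.add_apply, Dm, Matrix.diagonal_apply_ne _ huv, SimpleGraph.adjMatrix_apply]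
    rw [inc_sum_two G huv, zero_add]

lemma Km_mul_Bm {γ : Type*} [Fintype γ] : Km γ V * Bm G = (2:ℝ) • Km γ G.edgeSet := by
  ext g e
  simp only [Matrix.mul_apply, Km_apply, one_mul, Bm, Matrix.of_apply, Matrix.smul_apply,
    smul_eq_mul, mul_one]
  rw [inc_sum_row]

lemma BmT_mul_Km {γ : Type*} [Fintype γ] : (Bm G)ᵀ * Km V γ = (2:ℝ) • Km G.edgeSet γ := by
  ext e g
  simp only [Matrix.mul_apply, Km_apply, mul_one, Matrix.transpose_apply, Bm,
    Matrix.of_apply, Matrix.smul_apply, smul_eq_mul]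
  rw [inc_sum_row]

lemma Bm_mul_Km {γ : Type*} [Fintype γ] : Bm G * Km G.edgeSet γ = Dm G * Km V γ := by
  ext u g
  simp only [Matrix.mul_apply, Km_apply, mul_one, Bm, Matrix.of_apply, Dm]
  rw [inc_sum_col]
  simp [Matrix.diagonal_apply, Finset.sum_ite_eq, Finset.mem_univ]

lemma subdivision_connected (hconn : G.Connected) : (subdivision G).Connected := by
  haveI : Nonempty V := hconn.nonempty
  have key : ∀ u v : V, G.Reachable u v →
      (subdivision G).Reachable (Sum.inl u) (Sum.inl v) := by
    intro u v h
    obtain ⟨w⟩ := h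
    induction w with
    | nil => exact SimpleGraph.Reachable.refl _
    | @cons a b c hab p ih =>
      refine SimpleGraph.Reachable.trans ?_ ih
      have he : s(a, b) ∈ G.edgeSet := G.mem_edgeSet.mpr hab
      have h1 : (subdivision G).Adj (Sum.inl a) (Sum.inr ⟨s(a, b), he⟩) := by
        simp [Sym2.mem_iff]
      have h2 : (subdivision G).Adj (Sum.inr (⟨s(a, b), he⟩ : G.edgeSet)) (Sum.inl b) := by
        simp [Sym2.mem_iff]
      exact (h1.reachable).trans h2.reachable
  have toInl : ∀ x : V ⊕ G.edgeSet, ∃ u : V, (subdivision G).Reachable (Sum.inl u) x := by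
    rintro (u | e)
    · exact ⟨u, SimpleGraph.Reachable.refl _⟩
    · obtain ⟨ev, he⟩ := e
      induction ev with
      | _ a b =>
        refine ⟨a, ?_⟩
        have h1 : (subdivision G).Adj (Sum.inl a) (Sum.inr ⟨s(a, b), he⟩) := by
          simp [Sym2.mem_iff]
        exact h1.reachable
  constructor
  intro x y
  obtain ⟨u, hu⟩ := toInl x
  obtain ⟨w, hw⟩ := toInl y
  exact (hu.symm.trans (key u w (hconn.preconnected u w))).trans hw

end GraphAux

set_option maxHeartbeats 1000000 in
theorem statement_14 {V : Type*} [Fintype V] [DecidableEq V]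
    (G : SimpleGraph V) [DecidableRel G.Adj] (n m : ℕ)
    (hn : Fintype.card V = n) (hm : G.edgeFinset.card = m)
    (hconn : G.Connected) (hn2 : 2 ≤ n) :
    ∀ i j : G.edgeSet, i ≠ j →
      resistanceDistance (triangulation G) (Sum.inr i) (Sum.inr j) =
        (1 / 3) * resistanceDistance (subdivision G) (Sum.inr i) (Sum.inr j) + 2 / 3 := by
  classical
  intro i j hij
  haveI : Nonempty V := hconn.nonempty
  haveI : Nonempty (V ⊕ G.edgeSet) := ⟨Sum.inl (Classical.arbitrary V)⟩
  obtain ⟨Sp, mpS, symS, hSK, hLSX⟩ :=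
    exists_good_pinv (subdivision G) (subdivision_connected G hconn)
  have hNne : ((Fintype.card (V ⊕ G.edgeSet) : ℝ)) ≠ 0 := by
    have : 0 < Fintype.card (V ⊕ G.edgeSet) := Fintype.card_pos
    exact_mod_cast this.ne'
  set NN : ℝ := (Fintype.card (V ⊕ G.edgeSet) : ℝ) with hNN
  set c : ℝ := NN⁻¹ with hc
  have hNnm : NN = (Fintype.card V : ℝ) + (Fintype.card G.edgeSet : ℝ) := by
    rw [hNN, Fintype.card_sum]; push_cast; ring
  have hnmne : (Fintype.card V : ℝ) + (Fintype.card G.edgeSet : ℝ) ≠ 0 := by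
    rw [← hNnm]; exact hNne
  set γc : ℝ := -(2 * (Fintype.card V : ℝ) + (Fintype.card G.edgeSet : ℝ)) / (3 * NN ^ 2)
    with hγ
  set βc : ℝ := γc + c / 3 with hβ
  set αc : ℝ := γc + 2 * c / 3 with hα
  have sc1 : αc * (Fintype.card V : ℝ) + βc * (Fintype.card G.edgeSet : ℝ) = 0 := by
    rw [hα, hβ, hγ, hc, hNnm]
    exact sc_aux1 _ _ hnmne
  have sc2 : βc * (Fintype.card V : ℝ) + γc * (Fintype.card G.edgeSet : ℝ) = -3⁻¹ := by
    rw [hβ, hγ, hc, hNnm]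
    exact sc_aux2 _ _ hnmne
  -- blocks of Sp
  set P := Sp.toBlocks₁₁ with hPdef
  set Q := Sp.toBlocks₁₂ with hQdef
  set Q' := Sp.toBlocks₂₁ with hQ'def
  set R := Sp.toBlocks₂₂ with hRdef
  have hSp : Sp = Matrix.fromBlocks P Q Q' R := (Matrix.fromBlocks_toBlocks Sp).symm
  have hsymB : Matrix.fromBlocks Pᵀ Q'ᵀ Qᵀ Rᵀ = Matrix.fromBlocks P Q Q' R := by
    have h := symS
    rw [hSp, Matrix.fromBlocks_transpose] at h
    exact h
  obtain ⟨hPsym, hQ'T, -, -⟩ := Matrix.fromBlocks_inj.mp hsymB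
  have hone : (1 : Matrix (V ⊕ G.edgeSet) (V ⊕ G.edgeSet) ℝ) - c • Km _ _
      = Matrix.fromBlocks (1 - c • Km V V) (-(c • Km V G.edgeSet))
        (-(c • Km G.edgeSet V)) (1 - c • Km G.edgeSet G.edgeSet) := by
    rw [Km_sum_blocks, ← Matrix.fromBlocks_one, Matrix.fromBlocks_smul, sub_eq_add_neg,
      Matrix.fromBlocks_neg, Matrix.fromBlocks_add]
    simp [sub_eq_add_neg]
  have hLSXb := hLSX
  rw [lap_sub_blocks G, hSp, Matrix.fromBlocks_multiply, hone] at hLSXb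
  obtain ⟨eq11, -, eq21, -⟩ := Matrix.fromBlocks_inj.mp hLSXb
  have hBTP : (Bm G)ᵀ * P = (2:ℝ) • Q' + c • Km G.edgeSet V := by
    have h := eq21
    rw [Matrix.neg_mul, Matrix.smul_mul, Matrix.one_mul] at h
    rw [← sub_eq_zero] at h ⊢
    calc (Bm G)ᵀ * P - ((2:ℝ) • Q' + c • Km G.edgeSet V)
        = -((-((Bm G)ᵀ * P) + (2:ℝ) • Q' - -(c • Km G.edgeSet V))) := by abel
    _ = 0 := by rw [h, neg_zero]
  have e11 : Dm G * P - Bm G * Q' = 1 - c • Km V V := by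
    have h := eq11
    rw [Matrix.neg_mul] at h
    rw [sub_eq_add_neg]
    exact h
  have hLG2 : G.lapMatrix ℝ = (2:ℝ) • Dm G - Bm G * (Bm G)ᵀ := by
    rw [BBT]
    have hD : G.degMatrix ℝ = Dm G := rfl
    rw [SimpleGraph.lapMatrix, hD, two_smul]
    abel
  have hLP : G.lapMatrix ℝ * P
      = (2:ℝ) • (1 : Matrix V V ℝ) - (2 * c) • Km V V - c • (Dm G * Km V V) := by
    have step : G.lapMatrix ℝ * P
        = (2:ℝ) • (Dm G * P - Bm G * Q') - c • (Dm G * Km V V) := by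
      rw [hLG2, Matrix.sub_mul, Matrix.smul_mul, Matrix.mul_assoc, hBTP, Matrix.mul_add,
        Matrix.mul_smul, Matrix.mul_smul, Bm_mul_Km]
      module
    rw [step, e11]
    module
  have h2Q' : (2:ℝ) • Q' = (Bm G)ᵀ * P - c • Km G.edgeSet V := by
    rw [hBTP]; abel
  have hQ'eq : Q' = (2⁻¹:ℝ) • ((Bm G)ᵀ * P - c • Km G.edgeSet V) := by
    rw [← h2Q', smul_smul]
    norm_num
  have hQeq : Q = (2⁻¹:ℝ) • (P * Bm G - c • Km V G.edgeSet) := by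
    rw [← hQ'T, hQ'eq, Matrix.transpose_smul, Matrix.transpose_sub, Matrix.transpose_mul,
      Matrix.transpose_transpose, hPsym, Matrix.transpose_smul, Km_transpose]
  have hLQ : G.lapMatrix ℝ * Q
      = Bm G - (2 * c) • Km V G.edgeSet - c • (Dm G * Km V G.edgeSet) := by
    rw [hQeq, Matrix.mul_smul, Matrix.mul_sub, Matrix.mul_smul, lap_mul_Km, smul_zero,
      sub_zero, ← Matrix.mul_assoc, hLP, Matrix.sub_mul, Matrix.sub_mul, Matrix.smul_mul,
      Matrix.one_mul, Matrix.smul_mul, Km_mul_Bm, Matrix.smul_mul, Matrix.mul_assoc,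
      Km_mul_Bm, Matrix.mul_smul]
    module
  -- the candidate Moore-Penrose inverse of the triangulation Laplacian
  set Ep : Matrix (V ⊕ G.edgeSet) (V ⊕ G.edgeSet) ℝ := Matrix.fromBlocks 0 0 0 1 with hEp
  set Wb : Matrix (V ⊕ G.edgeSet) (V ⊕ G.edgeSet) ℝ :=
    Matrix.fromBlocks (αc • Km V V) (βc • Km V G.edgeSet)
      (βc • Km G.edgeSet V) (γc • Km G.edgeSet G.edgeSet) with hWb
  set Cm : Matrix (V ⊕ G.edgeSet) (V ⊕ G.edgeSet) ℝ :=
    (3⁻¹ : ℝ) • Sp + (3⁻¹ : ℝ) • Ep + Wb with hCm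
  have hLSE : (subdivision G).lapMatrix ℝ * Ep
      = Matrix.fromBlocks 0 (-(Bm G)) 0 ((2:ℝ) • 1) := by
    rw [lap_sub_blocks G, hEp, Matrix.fromBlocks_multiply]
    simp
  have hLSW : (subdivision G).lapMatrix ℝ * Wb
      = Matrix.fromBlocks ((αc - βc) • (Dm G * Km V V)) ((βc - γc) • (Dm G * Km V G.edgeSet))
        ((2 * βc - 2 * αc) • Km G.edgeSet V) ((2 * γc - 2 * βc) • Km G.edgeSet G.edgeSet) := by
    rw [lap_sub_blocks G, hWb, Matrix.fromBlocks_multiply, Matrix.fromBlocks_inj]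
    refine ⟨?_, ?_, ?_, ?_⟩
    · rw [Matrix.mul_smul, Matrix.mul_smul, Matrix.neg_mul, Bm_mul_Km]
      module
    · rw [Matrix.mul_smul, Matrix.mul_smul, Matrix.neg_mul, Bm_mul_Km]
      module
    · rw [Matrix.mul_smul, Matrix.mul_smul, Matrix.neg_mul, BmT_mul_Km, Matrix.smul_mul,
        Matrix.one_mul]
      module
    · rw [Matrix.mul_smul, Matrix.mul_smul, Matrix.neg_mul, BmT_mul_Km, Matrix.smul_mul,
        Matrix.one_mul]
      module
  have hFS : Matrix.fromBlocks (G.lapMatrix ℝ) 0 0 0 * Sp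
      = Matrix.fromBlocks (G.lapMatrix ℝ * P) (G.lapMatrix ℝ * Q) 0 0 := by
    rw [hSp, Matrix.fromBlocks_multiply]
    simp
  have hFE : Matrix.fromBlocks (G.lapMatrix ℝ) 0 0 0 * Ep = 0 := by
    rw [hEp, Matrix.fromBlocks_multiply]
    simp [Matrix.fromBlocks_zero]
  have hFW : Matrix.fromBlocks (G.lapMatrix ℝ) 0 0 0 * Wb = 0 := by
    rw [hWb, Matrix.fromBlocks_multiply]
    simp [Matrix.mul_smul, lap_mul_Km, Matrix.fromBlocks_zero]
  have hCK : Cm * Km (V ⊕ G.edgeSet) (V ⊕ G.edgeSet) = 0 := by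
    have hEK : Ep * Km (V ⊕ G.edgeSet) (V ⊕ G.edgeSet)
        = Matrix.fromBlocks 0 0 (Km G.edgeSet V) (Km G.edgeSet G.edgeSet) := by
      rw [hEp, Km_sum_blocks, Matrix.fromBlocks_multiply]
      simp
    have hWK : Wb * Km (V ⊕ G.edgeSet) (V ⊕ G.edgeSet)
        = Matrix.fromBlocks 0 0 ((-3⁻¹ : ℝ) • Km G.edgeSet V)
            ((-3⁻¹ : ℝ) • Km G.edgeSet G.edgeSet) := by
      rw [hWb, Km_sum_blocks, Matrix.fromBlocks_multiply, Matrix.fromBlocks_inj]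
      refine ⟨?_, ?_, ?_, ?_⟩
      · rw [Matrix.smul_mul, Matrix.smul_mul, Km_mul_Km, Km_mul_Km, smul_smul, smul_smul,
          ← add_smul, sc1, zero_smul]
      · rw [Matrix.smul_mul, Matrix.smul_mul, Km_mul_Km, Km_mul_Km, smul_smul, smul_smul,
          ← add_smul, sc1, zero_smul]
      · rw [Matrix.smul_mul, Matrix.smul_mul, Km_mul_Km, Km_mul_Km, smul_smul, smul_smul,
          ← add_smul, sc2]
      · rw [Matrix.smul_mul, Matrix.smul_mul, Km_mul_Km, Km_mul_Km, smul_smul, smul_smul,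
          ← add_smul, sc2]
    rw [hCm, Matrix.add_mul, Matrix.add_mul, Matrix.smul_mul, Matrix.smul_mul, hSK,
      smul_zero, hEK, hWK]
    ext x y
    rcases x with u | e <;> rcases y with v | f <;> simp <;> norm_num
  have hCsym : Cmᵀ = Cm := by
    rw [hCm, Matrix.transpose_add, Matrix.transpose_add, Matrix.transpose_smul,
      Matrix.transpose_smul, symS, hEp, hWb, Matrix.fromBlocks_transpose,
      Matrix.fromBlocks_transpose]
    simp [Matrix.transpose_smul, Km_transpose]
  have hLTC : (triangulation G).lapMatrix ℝ * Cm
      = 1 - c • Km (V ⊕ G.edgeSet) (V ⊕ G.edgeSet) := by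
    rw [lap_tri_blocks G, Matrix.add_mul, hCm, Matrix.mul_add, Matrix.mul_add,
      Matrix.mul_add, Matrix.mul_add, Matrix.mul_smul, Matrix.mul_smul, Matrix.mul_smul,
      Matrix.mul_smul, hLSX, hLSE, hLSW, hFS, hFE, hFW, hLP, hLQ, hone]
    simp only [Matrix.fromBlocks_smul, Matrix.fromBlocks_add, add_zero, smul_zero]
    rw [Matrix.fromBlocks_inj]
    refine ⟨?_, ?_, ?_, ?_⟩ <;>
      · simp only [hα, hβ]
        module
  have mpT : IsMoorePenrose ((triangulation G).lapMatrix ℝ) Cm := by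
    refine mp_of ((triangulation G).isSymm_lapMatrix (R := ℝ)).eq hCsym ?_ ?_ ?_ hLTC
    · rw [Matrix.transpose_smul, Km_transpose]
    · rw [Matrix.mul_smul, lap_mul_Km, smul_zero]
    · rw [Matrix.mul_smul, hCK, smul_zero]
  rw [resistance_eq (triangulation G) mpT, resistance_eq (subdivision G) mpS]
  have hCe : ∀ e f : G.edgeSet, Cm (Sum.inr e) (Sum.inr f)
      = 3⁻¹ * Sp (Sum.inr e) (Sum.inr f) + 3⁻¹ * (if e = f then 1 else 0) + γc := by
    intro e f
    rw [hCm, hEp, hWb]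
    simp [Matrix.one_apply, smul_eq_mul]
  rw [hCe, hCe, hCe, if_pos rfl, if_pos rfl, if_neg hij]
  ring

end KirchhoffPaper
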